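/- Under the hypotheses of the contraction theorem (Case 1: each fₖ μₖ-strongly convex and Lₖ-smooth, α ∈ (0, α₀] with α₀ = min_k 2nπₖ/(Lₖ+μₖ)), the fixed point w^α of T_α satisfies ‖w^α‖_{π⊗1_d} ≤ (1/C)‖J(∇F(0))‖_{π⊗1_d}, uniformly in α, where C = min_k μₖLₖ/(nπₖ(μₖ+Lₖ)). -/

import Mathlib

open InnerProductSpace

local notation "⟪" x ", " y "⟫" => @inner ℝ _ _ x y

variable {E : Type*} [NormedAddCommGroup E] [InnerProductSpace ℝ E] [CompleteSpace E]

private lemma aux_lineDeriv {g : E → ℝ} {G : E → E} (hG : ∀ z, HasGradientAt g (G z) z)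
    (x v : E) (t : ℝ) :
    HasDerivAt (fun s : ℝ => g (x + s • v)) ⟪G (x + t • v), v⟫ t := by
  have h1 : HasDerivAt (fun s : ℝ => x + s • v) v t := by
    simpa using ((hasDerivAt_id t).smul_const v).const_add x
  have h2 := (hG (x + t • v)).hasFDerivAt
  simpa [InnerProductSpace.toDual_apply_apply, Function.comp_def] using h2.comp_hasDerivAt t h1

private lemma aux_first_order {g : E → ℝ} {G : E → E} (hc : ConvexOn ℝ Set.univ g)
    (hG : ∀ z, HasGradientAt g (G z) z) (x y : E) :
    g x + ⟪G x, y - x⟫ ≤ g y := by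
  have hfun : (fun t : ℝ => g (x + t • (y - x)))
      = g ∘ (AffineMap.lineMap x y : ℝ →ᵃ[ℝ] E) := by
    funext t
    simp [AffineMap.lineMap_apply_module', add_comm]
  have hφc : ConvexOn ℝ Set.univ (fun t : ℝ => g (x + t • (y - x))) := by
    rw [hfun]
    simpa using hc.comp_affineMap (AffineMap.lineMap x y : ℝ →ᵃ[ℝ] E)
  have hd : HasDerivAt (fun t : ℝ => g (x + t • (y - x))) ⟪G x, y - x⟫ 0 := by
    have := aux_lineDeriv hG x (y - x) 0
    simpa using this
  have hs := hφc.le_slope_of_hasDerivAt (Set.mem_univ (0:ℝ)) (Set.mem_univ 1) one_pos hd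
  have : slope (fun t : ℝ => g (x + t • (y - x))) 0 1 = g y - g x := by
    simp [slope_def_field]
  rw [this] at hs
  linarith

private lemma aux_mono {g : E → ℝ} {G : E → E} (hc : ConvexOn ℝ Set.univ g)
    (hG : ∀ z, HasGradientAt g (G z) z) (x y : E) :
    0 ≤ ⟪G x - G y, x - y⟫ := by
  have h1 := aux_first_order hc hG x y
  have h2 := aux_first_order hc hG y x
  simp only [inner_sub_left, inner_sub_right] at h1 h2 ⊢
  linarith

private lemma aux_descent {g : E → ℝ} {G : E → E} (hG : ∀ z, HasGradientAt g (G z) z)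
    {c : ℝ} (hc : 0 ≤ c) (H : ∀ a b, ⟪G a - G b, a - b⟫ ≤ c * ‖a - b‖ ^ 2) (x y : E) :
    g y ≤ g x + ⟪G x, y - x⟫ + c / 2 * ‖y - x‖ ^ 2 := by
  set v := y - x with hv
  set ψ : ℝ → ℝ := fun t => g (x + t • v) - t * ⟪G x, v⟫ - c * t ^ 2 / 2 * ‖v‖ ^ 2 with hψ
  have hd : ∀ t : ℝ, HasDerivAt ψ
      (⟪G (x + t • v), v⟫ - ⟪G x, v⟫ - c * t * ‖v‖ ^ 2) t := by
    intro t
    have h1 := aux_lineDeriv hG x v t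
    have h2 : HasDerivAt (fun t : ℝ => t * ⟪G x, v⟫) ⟪G x, v⟫ t := by
      simpa using (hasDerivAt_id t).mul_const (⟪G x, v⟫)
    have h3 : HasDerivAt (fun t : ℝ => c * t ^ 2 / 2 * ‖v‖ ^ 2) (c * t * ‖v‖ ^ 2) t := by
      have := (((hasDerivAt_pow 2 t).const_mul c).div_const 2).mul_const (‖v‖ ^ 2)
      refine this.congr_deriv ?_
      ring
    exact (h1.sub h2).sub h3
  have hanti : AntitoneOn ψ (Set.Icc (0:ℝ) 1) := by
    apply antitoneOn_of_deriv_nonpos (convex_Icc 0 1)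
    · exact fun t _ => ((hd t).continuousAt).continuousWithinAt
    · exact fun t _ => ((hd t).differentiableAt).differentiableWithinAt
    · intro t ht
      rw [interior_Icc] at ht
      rw [(hd t).deriv]
      have ht0 : 0 < t := ht.1
      have key := H (x + t • v) x
      have e1 : x + t • v - x = t • v := by abel
      rw [e1] at key
      have e2 : ‖t • v‖ ^ 2 = t ^ 2 * ‖v‖ ^ 2 := by
        rw [norm_smul, Real.norm_eq_abs, mul_pow, sq_abs]
      rw [e2, inner_sub_left, real_inner_smul_right, real_inner_smul_right] at key
      -- key : t * ⟪G (x+t•v), v⟫ - t * ⟪G x, v⟫ ≤ c * (t^2 * ‖v‖^2)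
      nlinarith [key, ht0]
  have h01 := hanti (Set.mem_Icc.mpr ⟨le_refl 0, zero_le_one⟩)
      (Set.mem_Icc.mpr ⟨zero_le_one, le_refl 1⟩) zero_le_one
  have e0 : ψ 0 = g x := by simp [hψ]
  have e1 : ψ 1 = g y - ⟪G x, v⟫ - c / 2 * ‖v‖ ^ 2 := by
    have hxy : x + (1:ℝ) • v = y := by rw [one_smul, hv]; abel
    simp only [hψ]
    rw [hxy]
    ring
  rw [e0, e1] at h01
  linarith

private lemma aux_coco {g : E → ℝ} {G : E → E} (hconv : ConvexOn ℝ Set.univ g)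
    (hG : ∀ z, HasGradientAt g (G z) z) {c : ℝ} (hc : 0 < c)
    (H : ∀ a b, ⟪G a - G b, a - b⟫ ≤ c * ‖a - b‖ ^ 2) (x y : E) :
    ‖G x - G y‖ ^ 2 ≤ c * ⟪G x - G y, x - y⟫ := by
  have key : ∀ p q : E, g p + ⟪G p, q - p⟫ + 1 / (2 * c) * ‖G q - G p‖ ^ 2 ≤ g q := by
    intro p q
    set φ : E → ℝ := fun z => g z - ⟪G p, z⟫ with hφdef
    set Gφ : E → E := fun z => G z - G p with hGφdef
    have hGφ : ∀ z, HasGradientAt φ (Gφ z) z := by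
      intro z
      have h1 : HasFDerivAt g (toDual ℝ E (G z)) z := (hG z).hasFDerivAt
      have h2 : HasFDerivAt (fun z : E => ⟪G p, z⟫) (innerSL ℝ (G p)) z :=
        (innerSL ℝ (G p)).hasFDerivAt
      have h3 := h1.sub h2
      have e : toDual ℝ E (G z) - innerSL ℝ (G p) = toDual ℝ E (G z - G p) := by
        ext w
        simp [InnerProductSpace.toDual_apply_apply, inner_sub_left]
      rw [e] at h3
      have := h3.hasGradientAt
      simpa [hφdef, hGφdef, Pi.sub_def] using this
    have hφconv : ConvexOn ℝ Set.univ φ := by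
      refine ⟨convex_univ, fun a _ b _ s t hs ht hst => ?_⟩
      have h := hconv.2 (Set.mem_univ a) (Set.mem_univ b) hs ht hst
      simp only [hφdef, smul_eq_mul] at h ⊢
      simp only [inner_add_right, real_inner_smul_right]
      linarith
    have Hφ : ∀ a b, ⟪Gφ a - Gφ b, a - b⟫ ≤ c * ‖a - b‖ ^ 2 := by
      intro a b
      have e : Gφ a - Gφ b = G a - G b := by simp [hGφdef]
      rw [e]; exact H a b
    have hmin : ∀ z, φ p ≤ φ z := by
      intro z
      have := aux_first_order hφconv hGφ p z
      have e : Gφ p = 0 := by simp [hGφdef]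
      rw [e, inner_zero_left] at this
      linarith
    set z' := q - (1 / c) • (G q - G p) with hz'
    have hdz := aux_descent hGφ hc.le Hφ q z'
    have e1 : z' - q = -((1 / c) • (G q - G p)) := by rw [hz']; abel
    have e2 : ⟪Gφ q, z' - q⟫ = -(1 / c) * ‖G q - G p‖ ^ 2 := by
      rw [e1, hGφdef, inner_neg_right, real_inner_smul_right,
        real_inner_self_eq_norm_sq]
      ring
    have e3 : ‖z' - q‖ ^ 2 = (1 / c) ^ 2 * ‖G q - G p‖ ^ 2 := by
      rw [e1, norm_neg, norm_smul, Real.norm_eq_abs, mul_pow, sq_abs]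
    rw [e2, e3] at hdz
    have hmz := hmin z'
    have hexp : ⟪G p, q - p⟫ = ⟪G p, q⟫ - ⟪G p, p⟫ := inner_sub_right _ _ _
    simp only [hφdef] at hdz hmz
    have hc' : c ≠ 0 := ne_of_gt hc
    have harith : -(1/c) * ‖G q - G p‖^2 + c / 2 * ((1/c)^2 * ‖G q - G p‖^2)
        = -(1/(2*c)) * ‖G q - G p‖^2 := by field_simp; ring
    nlinarith [hdz, hmz, hexp]
  have k1 := key x y
  have k2 := key y x
  have e : ‖G y - G x‖ = ‖G x - G y‖ := norm_sub_rev _ _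
  rw [e] at k1
  have h2c : (1:ℝ) / c = 2 * (1 / (2 * c)) := by field_simp
  have hsum : (1 / c) * ‖G x - G y‖ ^ 2 ≤ ⟪G x - G y, x - y⟫ := by
    simp only [inner_sub_left, inner_sub_right] at k1 k2 ⊢
    rw [h2c]
    linarith
  calc ‖G x - G y‖ ^ 2 = c * ((1 / c) * ‖G x - G y‖ ^ 2) := by field_simp
    _ ≤ c * ⟪G x - G y, x - y⟫ := mul_le_mul_of_nonneg_left hsum hc.le

private lemma aux_keyA {g : E → ℝ} {μ L : ℝ} (hμ : 0 < μ) (hμL : μ ≤ L)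
    (hdiff : Differentiable ℝ g)
    (hsc : ConvexOn ℝ Set.univ (fun z => g z - μ / 2 * ‖z‖ ^ 2))
    (hsm : LipschitzWith L.toNNReal (gradient g)) (x y : E) :
    ‖gradient g x - gradient g y‖ ^ 2 + μ * L * ‖x - y‖ ^ 2
      ≤ (μ + L) * ⟪gradient g x - gradient g y, x - y⟫ := by
  set G := gradient g with hGdef
  have hL0 : 0 < L := lt_of_lt_of_le hμ hμL
  have hG : ∀ z, HasGradientAt g (G z) z := fun z => (hdiff z).hasGradientAt
  have hLip : ∀ a b : E, ‖G a - G b‖ ≤ L * ‖a - b‖ := by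
    intro a b
    have := hsm.dist_le_mul a b
    rwa [dist_eq_norm, dist_eq_norm, Real.coe_toNNReal L hL0.le] at this
  have hh : ∀ z, HasGradientAt (fun z => g z - μ / 2 * ‖z‖ ^ 2) (G z - μ • z) z := by
    intro z
    have h1 : HasFDerivAt g (toDual ℝ E (G z)) z := (hG z).hasFDerivAt
    have h2 : HasFDerivAt (fun z : E => μ / 2 * ‖z‖ ^ 2)
        ((μ / 2) • (2 • (innerSL ℝ z))) z :=
      ((hasStrictFDerivAt_norm_sq z).hasFDerivAt).const_mul (μ / 2)
    have h3 := h1.sub h2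
    have e : toDual ℝ E (G z) - (μ / 2) • (2 • (innerSL ℝ z)) = toDual ℝ E (G z - μ • z) := by
      ext w
      simp [InnerProductSpace.toDual_apply_apply, inner_sub_left, real_inner_smul_left]
      ring
    rw [e] at h3
    simpa [Pi.sub_def] using h3.hasGradientAt
  have hmono : ∀ a b : E, μ * ‖a - b‖ ^ 2 ≤ ⟪G a - G b, a - b⟫ := by
    intro a b
    have := aux_mono hsc hh a b
    have e : G a - μ • a - (G b - μ • b) = (G a - G b) - μ • (a - b) := by
      rw [smul_sub]; abel
    rw [e, inner_sub_left, real_inner_smul_left, real_inner_self_eq_norm_sq] at this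
    linarith
  have HΔ : ∀ a b : E, ⟪(G a - μ • a) - (G b - μ • b), a - b⟫ ≤ (L - μ) * ‖a - b‖ ^ 2 := by
    intro a b
    have e : G a - μ • a - (G b - μ • b) = (G a - G b) - μ • (a - b) := by
      rw [smul_sub]; abel
    rw [e, inner_sub_left, real_inner_smul_left, real_inner_self_eq_norm_sq]
    have h1 : ⟪G a - G b, a - b⟫ ≤ ‖G a - G b‖ * ‖a - b‖ := real_inner_le_norm _ _
    have h2 : ‖G a - G b‖ * ‖a - b‖ ≤ (L * ‖a - b‖) * ‖a - b‖ :=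
      mul_le_mul_of_nonneg_right (hLip a b) (norm_nonneg _)
    nlinarith
  rcases eq_or_lt_of_le hμL with heq | hlt
  · -- μ = L
    subst heq
    have h1 := hmono x y
    have h2 := hLip x y
    have h3 : ‖G x - G y‖ ^ 2 ≤ (μ * ‖x - y‖) ^ 2 := by
      have := mul_self_le_mul_self (norm_nonneg (G x - G y)) h2
      nlinarith [this]
    nlinarith [mul_le_mul_of_nonneg_left h1 hμ.le]
  · have hc : (0:ℝ) < L - μ := by linarith
    have coco := aux_coco hsc hh hc HΔ x y
    have e : G x - μ • x - (G y - μ • y) = (G x - G y) - μ • (x - y) := by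
      rw [smul_sub]; abel
    rw [e] at coco
    have eL : ‖(G x - G y) - μ • (x - y)‖ ^ 2
        = ‖G x - G y‖ ^ 2 - 2 * (μ * ⟪G x - G y, x - y⟫) + μ ^ 2 * ‖x - y‖ ^ 2 := by
      rw [norm_sub_sq_real, real_inner_smul_right, norm_smul, Real.norm_eq_abs,
        mul_pow, sq_abs]
    have eR : ⟪(G x - G y) - μ • (x - y), x - y⟫
        = ⟪G x - G y, x - y⟫ - μ * ‖x - y‖ ^ 2 := by
      rw [inner_sub_left, real_inner_smul_left, real_inner_self_eq_norm_sq]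
    rw [eL, eR] at coco
    nlinarith

private lemma aux_step {g : E → ℝ} {μ L c α : ℝ} (hμ : 0 < μ) (hμL : μ ≤ L)
    (hdiff : Differentiable ℝ g)
    (hsc : ConvexOn ℝ Set.univ (fun z => g z - μ / 2 * ‖z‖ ^ 2))
    (hsm : LipschitzWith L.toNNReal (gradient g))
    (hc : 0 < c) (hα0 : 0 < α) (hα : α ≤ 2 * c / (L + μ)) (x : E) :
    ‖x - α • (gradient g ((1 / c) • x) - gradient g 0)‖ ^ 2
      ≤ (1 - α * (μ * L / (c * (μ + L)))) ^ 2 * ‖x‖ ^ 2 := by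
  have hL0 : 0 < L := lt_of_lt_of_le hμ hμL
  have hK : (0:ℝ) < μ + L := by linarith
  set u := gradient g ((1 / c) • x) - gradient g 0 with hu
  have key := aux_keyA hμ hμL hdiff hsc hsm ((1 / c) • x) 0
  rw [sub_zero] at key
  have h1 : ‖(1 / c) • x‖ ^ 2 = (1 / c) ^ 2 * ‖x‖ ^ 2 := by
    rw [norm_smul, Real.norm_eq_abs, mul_pow, sq_abs]
  have h2 : ⟪u, (1 / c) • x⟫ = (1 / c) * ⟪u, x⟫ := real_inner_smul_right _ _ _
  rw [h1, h2] at key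
  have hc' : c ≠ 0 := ne_of_gt hc
  have key2 : c ^ 2 * ‖u‖ ^ 2 + μ * L * ‖x‖ ^ 2 ≤ c * (μ + L) * ⟪u, x⟫ := by
    have h := mul_le_mul_of_nonneg_left key (sq_nonneg c)
    calc c ^ 2 * ‖u‖ ^ 2 + μ * L * ‖x‖ ^ 2
        = c ^ 2 * (‖u‖ ^ 2 + μ * L * ((1 / c) ^ 2 * ‖x‖ ^ 2)) := by
          field_simp
      _ ≤ c ^ 2 * ((μ + L) * ((1 / c) * ⟪u, x⟫)) := h
      _ = c * (μ + L) * ⟪u, x⟫ := by field_simp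
  have h3 : ‖x - α • u‖ ^ 2 = ‖x‖ ^ 2 - 2 * (α * ⟪x, u⟫) + α ^ 2 * ‖u‖ ^ 2 := by
    rw [norm_sub_sq_real, real_inner_smul_right, norm_smul, Real.norm_eq_abs,
      mul_pow, sq_abs]
  rw [h3]
  have hsym : ⟪x, u⟫ = ⟪u, x⟫ := real_inner_comm _ _
  rw [hsym]
  set I := ⟪u, x⟫ with hI
  set U := ‖u‖ ^ 2 with hU
  set X := ‖x‖ ^ 2 with hX
  have hU0 : 0 ≤ U := sq_nonneg _
  have hX0 : 0 ≤ X := sq_nonneg _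
  have hβ : (0:ℝ) < c * (μ + L) := mul_pos hc hK
  set s := μ * L / (c * (μ + L)) with hs
  set t := c / (μ + L) with ht
  have key3 : t * U + s * X ≤ I := by
    rw [← sub_nonneg]
    have e : I - (t * U + s * X)
        = (c * (μ + L) * I - (c ^ 2 * U + μ * L * X)) / (c * (μ + L)) := by
      rw [ht, hs]
      field_simp
    rw [e]
    exact div_nonneg (by linarith [key2]) hβ.le
  have h2t : α ≤ 2 * t := by
    have e : (2:ℝ) * t = 2 * c / (L + μ) := by rw [ht]; ring
    linarith [e ▸ hα]
  have h4 : α ^ 2 * U ≤ 2 * α * t * U := by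
    have h := mul_le_mul_of_nonneg_right
      (mul_le_mul_of_nonneg_right h2t hα0.le) hU0
    nlinarith [h]
  have h5 : 2 * α * (t * U + s * X) ≤ 2 * α * I :=
    mul_le_mul_of_nonneg_left key3 (by linarith : (0:ℝ) ≤ 2 * α)
  have h6 : 0 ≤ (α * s) ^ 2 * X := mul_nonneg (sq_nonneg _) hX0
  have expand : (1 - α * s) ^ 2 * X = X - 2 * α * s * X + (α * s) ^ 2 * X := by ring
  rw [expand]
  linarith [h5, h4, h6]

theorem stmt_10 {n d : ℕ} (hn : 0 < n)
    (f : Fin n → EuclideanSpace ℝ (Fin d) → ℝ)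
    (μ L : Fin n → ℝ) (W : Matrix (Fin n) (Fin n) ℝ) (π : Fin n → ℝ) (α : ℝ)
    (wα : Fin n → EuclideanSpace ℝ (Fin d))
    (hμ : ∀ k, 0 < μ k) (hμL : ∀ k, μ k ≤ L k)
    (hdiff : ∀ k, Differentiable ℝ (f k))
    (hsc : ∀ k, ConvexOn ℝ Set.univ (fun x => f k x - μ k / 2 * ‖x‖ ^ 2))
    (hsm : ∀ k, LipschitzWith (L k).toNNReal (gradient (f k)))
    (hW_nonneg : ∀ i j, 0 ≤ W i j)
    (hW_col : ∀ j, ∑ k, W k j = 1)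
    (hπ_pos : ∀ k, 0 < π k)
    (hπ_sum : ∑ k, π k = 1)
    (hπ_eig : ∀ k, ∑ j, W k j * π j = π k)
    (hα0 : 0 < α) (hα : α ≤ ⨅ k, 2 * n * π k / (L k + μ k))
    (hfix : ∀ k, wα k = ∑ j, W k j • (wα j - α • gradient (f j) ((1 / (n * π j)) • wα j))) :
    Real.sqrt (∑ k, (1 / π k) * ‖wα k‖ ^ 2) ≤
      (1 / (⨅ k, μ k * L k / (n * π k * (μ k + L k)))) *
        Real.sqrt (∑ k, (1 / π k) * ‖∑ j, W k j • gradient (f j) 0‖ ^ 2) := by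
  classical
  haveI : Nonempty (Fin n) := ⟨⟨0, hn⟩⟩
  have hnR : (0:ℝ) < n := by exact_mod_cast hn
  have hLpos : ∀ k, 0 < L k := fun k => lt_of_lt_of_le (hμ k) (hμL k)
  have hcpos : ∀ k, (0:ℝ) < ↑n * π k := fun k => mul_pos hnR (hπ_pos k)
  set C := ⨅ k, μ k * L k / (↑n * π k * (μ k + L k)) with hC
  have hCk_pos : ∀ k, 0 < μ k * L k / (↑n * π k * (μ k + L k)) := by
    intro k
    exact div_pos (mul_pos (hμ k) (hLpos k))
      (mul_pos (hcpos k) (by linarith [hμ k, hLpos k]))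
  have hC_le : ∀ k, C ≤ μ k * L k / (↑n * π k * (μ k + L k)) :=
    fun k => ciInf_le ((Set.finite_range _).bddBelow) k
  obtain ⟨k0, hk0⟩ := exists_eq_ciInf_of_finite
    (f := fun k => μ k * L k / (↑n * π k * (μ k + L k)))
  have hC_pos : 0 < C := by rw [hC, ← hk0]; exact hCk_pos k0
  have hα_le : ∀ k, α ≤ 2 * ↑n * π k / (L k + μ k) :=
    fun k => le_trans hα (ciInf_le ((Set.finite_range _).bddBelow) k)
  -- the per-coordinate contraction factor is in [0,1]
  have hfac : ∀ k, 0 ≤ 1 - α * (μ k * L k / (↑n * π k * (μ k + L k))) := by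
    intro k
    have h1 : α * (μ k * L k / (↑n * π k * (μ k + L k)))
        ≤ (2 * ↑n * π k / (L k + μ k)) * (μ k * L k / (↑n * π k * (μ k + L k))) :=
      mul_le_mul_of_nonneg_right (hα_le k) (hCk_pos k).le
    have h2 : (2 * ↑n * π k / (L k + μ k)) * (μ k * L k / (↑n * π k * (μ k + L k))) ≤ 1 := by
      rw [div_mul_div_comm, div_le_one
        (mul_pos (by linarith [hμ k, hLpos k]) (mul_pos (hcpos k) (by linarith [hμ k, hLpos k])))]
      nlinarith [mul_nonneg (hcpos k).le (sq_nonneg (μ k)),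
        mul_nonneg (hcpos k).le (sq_nonneg (L k))]
    linarith [le_trans h1 h2]
  have hαC1 : 0 ≤ 1 - α * C := by
    have := hfac k0
    rw [hC, ← hk0]
    exact this
  -- contraction of the gradient step, coordinatewise
  set v : Fin n → EuclideanSpace ℝ (Fin d) := fun j =>
    wα j - α • (gradient (f j) ((1 / (↑n * π j)) • wα j) - gradient (f j) 0) with hvdef
  have hv : ∀ j, ‖v j‖ ^ 2 ≤ (1 - α * C) ^ 2 * ‖wα j‖ ^ 2 := by
    intro j
    have hαj : α ≤ 2 * (↑n * π j) / (L j + μ j) := by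
      calc α ≤ 2 * ↑n * π j / (L j + μ j) := hα_le j
        _ = 2 * (↑n * π j) / (L j + μ j) := by ring
    have hstep := aux_step (hμ j) (hμL j) (hdiff j) (hsc j) (hsm j)
      (hcpos j) hα0 hαj (wα j)
    refine le_trans hstep ?_
    have h1 : 1 - α * (μ j * L j / (↑n * π j * (μ j + L j))) ≤ 1 - α * C := by
      have := mul_le_mul_of_nonneg_left (hC_le j) hα0.le
      linarith
    have h0 := hfac j
    have hsq : (1 - α * (μ j * L j / (↑n * π j * (μ j + L j)))) ^ 2 ≤ (1 - α * C) ^ 2 :=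
      pow_le_pow_left₀ h0 h1 2
    exact mul_le_mul_of_nonneg_right hsq (sq_nonneg _)
  -- decomposition of the fixed point
  have hdecomp : ∀ k, wα k
      = (∑ j, W k j • v j) - α • (∑ j, W k j • gradient (f j) 0) := by
    intro k
    conv_lhs => rw [hfix k]
    rw [Finset.smul_sum, ← Finset.sum_sub_distrib]
    refine Finset.sum_congr rfl fun j _ => ?_
    simp only [hvdef]
    module
  have htri : ∀ k, ‖wα k‖ ≤ ‖∑ j, W k j • v j‖ + α * ‖∑ j, W k j • gradient (f j) 0‖ := by
    intro k
    rw [hdecomp k]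
    refine le_trans (norm_sub_le _ _) ?_
    rw [norm_smul, Real.norm_eq_abs, abs_of_pos hα0]
  -- step 1 : the weighted operator norm of W is ≤ 1
  have hstep1 : ∑ k, (1 / π k) * ‖∑ j, W k j • v j‖ ^ 2 ≤ ∑ j, (1 / π j) * ‖v j‖ ^ 2 := by
    have hk : ∀ k, ‖∑ j, W k j • v j‖ ^ 2 ≤ π k * ∑ j, (W k j / π j) * ‖v j‖ ^ 2 := by
      intro k
      have h1 : ‖∑ j, W k j • v j‖ ≤ ∑ j, W k j * ‖v j‖ := by
        refine le_trans (norm_sum_le _ _) (le_of_eq ?_)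
        refine Finset.sum_congr rfl fun j _ => ?_
        rw [norm_smul, Real.norm_eq_abs, abs_of_nonneg (hW_nonneg k j)]
      have e1 : ∀ j, W k j * ‖v j‖
          = Real.sqrt (W k j * π j) * (Real.sqrt (W k j / π j) * ‖v j‖) := by
        intro j
        rw [← mul_assoc, ← Real.sqrt_mul (mul_nonneg (hW_nonneg k j) (hπ_pos j).le)]
        rw [show W k j * π j * (W k j / π j) = W k j ^ 2 by
          field_simp [(hπ_pos j).ne']]
        rw [Real.sqrt_sq (hW_nonneg k j)]
      have e2 : ∀ j, (Real.sqrt (W k j * π j)) ^ 2 = W k j * π j :=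
        fun j => Real.sq_sqrt (mul_nonneg (hW_nonneg k j) (hπ_pos j).le)
      have e3 : ∀ j, (Real.sqrt (W k j / π j) * ‖v j‖) ^ 2 = (W k j / π j) * ‖v j‖ ^ 2 := by
        intro j
        rw [mul_pow, Real.sq_sqrt (div_nonneg (hW_nonneg k j) (hπ_pos j).le)]
      calc ‖∑ j, W k j • v j‖ ^ 2 ≤ (∑ j, W k j * ‖v j‖) ^ 2 :=
            pow_le_pow_left₀ (norm_nonneg _) h1 2
        _ = (∑ j, Real.sqrt (W k j * π j) * (Real.sqrt (W k j / π j) * ‖v j‖)) ^ 2 := by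
            rw [Finset.sum_congr rfl fun j _ => e1 j]
        _ ≤ (∑ j, (Real.sqrt (W k j * π j)) ^ 2)
            * (∑ j, (Real.sqrt (W k j / π j) * ‖v j‖) ^ 2) :=
            Finset.sum_mul_sq_le_sq_mul_sq _ _ _
        _ = (∑ j, W k j * π j) * (∑ j, (W k j / π j) * ‖v j‖ ^ 2) := by
            rw [Finset.sum_congr rfl fun j _ => e2 j, Finset.sum_congr rfl fun j _ => e3 j]
        _ = π k * ∑ j, (W k j / π j) * ‖v j‖ ^ 2 := by rw [hπ_eig k]
    calc ∑ k, (1 / π k) * ‖∑ j, W k j • v j‖ ^ 2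
        ≤ ∑ k, (1 / π k) * (π k * ∑ j, (W k j / π j) * ‖v j‖ ^ 2) :=
          Finset.sum_le_sum fun k _ => mul_le_mul_of_nonneg_left (hk k)
            (one_div_nonneg.mpr (hπ_pos k).le)
      _ = ∑ k, ∑ j, (W k j / π j) * ‖v j‖ ^ 2 := by
          refine Finset.sum_congr rfl fun k _ => ?_
          rw [← mul_assoc, one_div_mul_cancel (hπ_pos k).ne', one_mul]
      _ = ∑ j, ∑ k, (W k j / π j) * ‖v j‖ ^ 2 := Finset.sum_comm
      _ = ∑ j, (1 / π j) * ‖v j‖ ^ 2 := by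
          refine Finset.sum_congr rfl fun j _ => ?_
          rw [Finset.sum_congr rfl fun k _ =>
            (by ring : (W k j / π j) * ‖v j‖ ^ 2 = W k j * ((1 / π j) * ‖v j‖ ^ 2))]
          rw [← Finset.sum_mul, hW_col j, one_mul]
  -- final assembly
  set Q2 := ∑ k, (1 / π k) * ‖∑ j, W k j • gradient (f j) 0‖ ^ 2 with hQ2
  set P2 := ∑ k, (1 / π k) * ‖wα k‖ ^ 2 with hP2
  have hP2nn : 0 ≤ P2 := Finset.sum_nonneg fun k _ =>
    mul_nonneg (one_div_nonneg.mpr (hπ_pos k).le) (sq_nonneg _)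
  have hQ2nn : 0 ≤ Q2 := Finset.sum_nonneg fun k _ =>
    mul_nonneg (one_div_nonneg.mpr (hπ_pos k).le) (sq_nonneg _)
  set P := Real.sqrt P2 with hP
  set Q := Real.sqrt Q2 with hQ
  set A : EuclideanSpace ℝ (Fin n) := WithLp.toLp 2 fun k =>
    Real.sqrt (1 / π k) * ‖∑ j, W k j • v j‖ with hA
  set B : EuclideanSpace ℝ (Fin n) := WithLp.toLp 2 fun k =>
    Real.sqrt (1 / π k) * (α * ‖∑ j, W k j • gradient (f j) 0‖) with hB
  have hnorm_sq : ∀ (x : EuclideanSpace ℝ (Fin n)), ‖x‖ ^ 2 = ∑ k, (x k) ^ 2 := by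
    intro x
    rw [EuclideanSpace.norm_eq]
    rw [Real.sq_sqrt (Finset.sum_nonneg fun k _ => sq_nonneg _)]
    exact Finset.sum_congr rfl fun k _ => by rw [Real.norm_eq_abs, sq_abs]
  have hA2 : ‖A‖ ^ 2 = ∑ k, (1 / π k) * ‖∑ j, W k j • v j‖ ^ 2 := by
    rw [hnorm_sq]
    refine Finset.sum_congr rfl fun k _ => ?_
    simp only [hA]
    rw [mul_pow, Real.sq_sqrt (one_div_nonneg.mpr (hπ_pos k).le)]
  have hB2 : ‖B‖ ^ 2 = α ^ 2 * Q2 := by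
    rw [hnorm_sq, hQ2, Finset.mul_sum]
    refine Finset.sum_congr rfl fun k _ => ?_
    simp only [hB]
    rw [mul_pow, Real.sq_sqrt (one_div_nonneg.mpr (hπ_pos k).le)]
    ring
  have hABsum : P ≤ ‖A‖ + ‖B‖ := by
    have h1 : P2 ≤ ‖A + B‖ ^ 2 := by
      rw [hnorm_sq, hP2]
      refine Finset.sum_le_sum fun k _ => ?_
      have hApB : (A + B) k = A k + B k := rfl
      rw [hApB]
      have e : A k + B k = Real.sqrt (1 / π k)
          * (‖∑ j, W k j • v j‖ + α * ‖∑ j, W k j • gradient (f j) 0‖) := by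
        simp only [hA, hB]; ring
      rw [e, mul_pow, Real.sq_sqrt (one_div_nonneg.mpr (hπ_pos k).le)]
      have h2 : ‖wα k‖ ^ 2
          ≤ (‖∑ j, W k j • v j‖ + α * ‖∑ j, W k j • gradient (f j) 0‖) ^ 2 :=
        pow_le_pow_left₀ (norm_nonneg _) (htri k) 2
      exact mul_le_mul_of_nonneg_left h2 (one_div_nonneg.mpr (hπ_pos k).le)
    have h3 : P ≤ ‖A + B‖ := by
      rw [hP]
      calc Real.sqrt P2 ≤ Real.sqrt (‖A + B‖ ^ 2) := Real.sqrt_le_sqrt h1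
        _ = ‖A + B‖ := Real.sqrt_sq (norm_nonneg _)
    exact h3.trans (norm_add_le A B)
  have hAbound : ‖A‖ ≤ (1 - α * C) * P := by
    have h1 : ‖A‖ ^ 2 ≤ (1 - α * C) ^ 2 * P2 := by
      rw [hA2]
      calc ∑ k, (1 / π k) * ‖∑ j, W k j • v j‖ ^ 2
          ≤ ∑ j, (1 / π j) * ‖v j‖ ^ 2 := hstep1
        _ ≤ ∑ j, (1 / π j) * ((1 - α * C) ^ 2 * ‖wα j‖ ^ 2) :=
            Finset.sum_le_sum fun j _ => mul_le_mul_of_nonneg_left (hv j)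
              (one_div_nonneg.mpr (hπ_pos j).le)
        _ = (1 - α * C) ^ 2 * P2 := by
            rw [hP2, Finset.mul_sum]
            exact Finset.sum_congr rfl fun j _ => by ring
    have h2 : ‖A‖ ≤ Real.sqrt ((1 - α * C) ^ 2 * P2) := by
      rw [← Real.sqrt_sq (norm_nonneg A)]
      exact Real.sqrt_le_sqrt h1
    rwa [Real.sqrt_mul (sq_nonneg _), Real.sqrt_sq hαC1, ← hP] at h2
  have hQnn : 0 ≤ Q := by rw [hQ]; exact Real.sqrt_nonneg _
  have hPnn : 0 ≤ P := by rw [hP]; exact Real.sqrt_nonneg _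
  have hBval : ‖B‖ = α * Q := by
    have h1 : ‖B‖ ^ 2 = (α * Q) ^ 2 := by
      rw [hB2, hQ, mul_pow, Real.sq_sqrt hQ2nn]
    have h2 : ‖B‖ = Real.sqrt ((α * Q) ^ 2) := by
      rw [← h1, Real.sqrt_sq (norm_nonneg _)]
    rw [h2, Real.sqrt_sq (mul_nonneg hα0.le hQnn)]
  have hmain : P ≤ (1 - α * C) * P + α * Q := by
    calc P ≤ ‖A‖ + ‖B‖ := hABsum
      _ ≤ (1 - α * C) * P + α * Q := by
          rw [hBval]
          exact add_le_add hAbound le_rfl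
  have hCP : C * P ≤ Q := by
    have h1 : α * (C * P) ≤ α * Q := by nlinarith [hmain]
    exact le_of_mul_le_mul_left h1 hα0
  calc P ≤ Q / C := (le_div_iff₀ hC_pos).mpr (by linarith [hCP])
    _ = 1 / C * Q := by ring
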